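/- A policy π of the finite-horizon vector-valued MDP is efficient if and only if there exist strictly positive weights p_1,...,p_k such that x_π maximizes the scalar linear objective (p^T C)x over the state-action frequency polytope P. -/

import Mathlib

open Finset

/-- A finite-horizon MDP with `N` states, horizon `T` (epochs `0,…,T-1`, so `T ≥ 2` has at
least one decision epoch), action sets `Fin (k s)` for each state `s`, and transition
probabilities `p t s a j = p_t(j | s, a)` governing the move from epoch `t` to `t+1`,
together with a strictly positive initial distribution `α`. -/
structure MDP (N T : ℕ) (k : Fin N → ℕ) : Type where
  p : ℕ → (s : Fin N) → Fin (k s) → Fin N → ℝ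
  α : Fin N → ℝ
  p_nonneg : ∀ t s a j, 0 ≤ p t s a j
  p_sum : ∀ t s a, ∑ j, p t s a j = 1
  α_pos : ∀ s, 0 < α s
  α_sum : ∑ s, α s = 1

/-- A (randomized, Markov, non-stationary) policy: `q t s a` is the probability that
action `a` is chosen in state `s` at decision epoch `t`. -/
structure Policy (N : ℕ) (k : Fin N → ℕ) : Type where
  q : ℕ → (s : Fin N) → Fin (k s) → ℝ
  q_nonneg : ∀ t s a, 0 ≤ q t s a
  q_sum : ∀ t s, ∑ a, q t s a = 1

variable {N T : ℕ} {k : Fin N → ℕ}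

/-- `condProb M π j t s` is `P^π(S_t = s | S_0 = j)` (epochs indexed from 0). -/
def condProb (M : MDP N T k) (π : Policy N k) (j : Fin N) : ℕ → Fin N → ℝ
  | 0, s => if s = j then 1 else 0
  | t+1, s => ∑ s', ∑ a, condProb M π j t s' * π.q t s' a * M.p t s' a s

/-- The state-action frequency `x_{π,t}(s,a) = ∑_j α(j) P^π(S_t = s, A_t = a | S_0 = j)`
(epochs indexed from 0, so the decision epochs are `0,…,T-2`). -/
def xsa (M : MDP N T k) (π : Policy N k) (t : ℕ) (s : Fin N) (a : Fin (k s)) : ℝ :=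
  ∑ j, M.α j * condProb M π j t s * π.q t s a

/-- The terminal state frequency `x_{π,T}(s)` (terminal epoch is `T-1` in 0-based indexing). -/
def xT (M : MDP N T k) (π : Policy N k) (s : Fin N) : ℝ :=
  ∑ j, M.α j * condProb M π j (T-1) s

variable (TT : ℕ)

/-- The finite-dimensional space housing state-action frequency vectors for a horizon
`TT + 2` process: a component `x.1 t s a` for every decision epoch `t ∈ {0,…,TT}`, state
`s` and action `a`, and a terminal component `x.2 s` for every state `s`. -/
abbrev FreqSpace (N : ℕ) (k : Fin N → ℕ) (TT : ℕ) : Type :=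
  (Fin (TT+1) → (s : Fin N) → Fin (k s) → ℝ) × (Fin N → ℝ)

/-- Membership in the state-action frequency polytope `P`: nonnegativity together with the
initial condition (a), flow conservation (b), and the terminal condition (c). -/
def inP {N : ℕ} {k : Fin N → ℕ} {TT : ℕ} (M : MDP N (TT+2) k)
    (x : FreqSpace N k TT) : Prop :=
  (∀ t s a, 0 ≤ x.1 t s a) ∧ (∀ s, 0 ≤ x.2 s) ∧
  (∀ j, ∑ a, x.1 0 j a = M.α j) ∧
  (∀ (t : Fin TT) (j : Fin N),
    ∑ a, x.1 t.succ j a = ∑ s, ∑ a, M.p (t : ℕ) s a j * x.1 t.castSucc s a) ∧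
  (∀ j, x.2 j = ∑ s, ∑ a, M.p TT s a j * x.1 (Fin.last TT) s a)

/-- The state-action frequency polytope `P`. -/
def Pset {N : ℕ} {k : Fin N → ℕ} {TT : ℕ} (M : MDP N (TT+2) k) :
    Set (FreqSpace N k TT) :=
  {x | inP M x}

/-- The state-action frequency vector `x_π` of a policy, as a point of `FreqSpace`. -/
def xvec {N : ℕ} {k : Fin N → ℕ} {TT : ℕ} (M : MDP N (TT+2) k) (π : Policy N k) :
    FreqSpace N k TT :=
  (fun t s a => xsa M π (t : ℕ) s a, fun s => xT M π s)

/-- The process is regular when every policy can reach every state at every epoch. -/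
def RegularProcess {N : ℕ} {k : Fin N → ℕ} {TT : ℕ} (M : MDP N (TT+2) k) : Prop :=
  ∀ (π : Policy N k) (t : ℕ) (s : Fin N), t ≤ TT + 1 → ∃ j, 0 < condProb M π j t s

/-- A policy is deterministic (up to the horizon) if at every decision epoch and state it
puts probability one on a single action. -/
def Deterministic {N : ℕ} (k : Fin N → ℕ) (TT : ℕ) (π : Policy N k) : Prop :=
  ∀ t s, t ≤ TT → ∃ a, π.q t s a = 1

/-- A policy is regular if at every decision epoch and every state unreachable there, it
puts full mass on the first action. -/
def RegularPol {N : ℕ} {k : Fin N → ℕ} {TT : ℕ} (M : MDP N (TT+2) k)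
    (hk : ∀ s, 1 ≤ k s) (π : Policy N k) : Prop :=
  ∀ t s, t ≤ TT → (∀ j, condProb M π j t s = 0) → π.q t s ⟨0, hk s⟩ = 1

/-- The linear reward objective of the equivalent vector linear program: `Cx`, the total
vector-valued reward accrued by a state-action frequency vector `x`. -/
def Lval {N TT kk : ℕ} {k : Fin N → ℕ}
    (R : ℕ → (s : Fin N) → Fin (k s) → Fin kk → ℝ) (RT : Fin N → Fin kk → ℝ)
    (x : FreqSpace N k TT) : Fin kk → ℝ :=
  (∑ t : Fin (TT+1), ∑ s, ∑ a, x.1 t s a • R (t : ℕ) s a) + ∑ s, x.2 s • RT s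


section Aux

variable {N T : ℕ} {k : Fin N → ℕ}

lemma condProb_nonneg (M : MDP N T k) (π : Policy N k) (j : Fin N) :
    ∀ t s, 0 ≤ condProb M π j t s := by
  intro t
  induction t with
  | zero => intro s; simp only [condProb]; split <;> norm_num
  | succ t ih =>
      intro s
      simp only [condProb]
      apply Finset.sum_nonneg; intro s' _
      apply Finset.sum_nonneg; intro a _
      have := ih s'
      have := π.q_nonneg t s' a
      have := M.p_nonneg t s' a s
      positivity

lemma condProb_congr (M : MDP N T k) (π₁ π₂ : Policy N k) (j : Fin N) :
    ∀ t, (∀ t' s a, t' < t → π₁.q t' s a = π₂.q t' s a) →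
      ∀ s, condProb M π₁ j t s = condProb M π₂ j t s := by
  intro t
  induction t with
  | zero => intro _ s; simp [condProb]
  | succ t ih =>
      intro h s
      simp only [condProb]
      refine Finset.sum_congr rfl fun s' _ => Finset.sum_congr rfl fun a _ => ?_
      rw [ih (fun t' s a ht' => h t' s a (ht'.trans (Nat.lt_succ_self t))) s',
        h t s' a (Nat.lt_succ_self t)]

lemma condProb_zero (M : MDP N T k) (π : Policy N k) (j s : Fin N) :
    condProb M π j 0 s = if s = j then 1 else 0 := rfl

lemma condProb_succ (M : MDP N T k) (π : Policy N k) (j s : Fin N) (t : ℕ) :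
    condProb M π j (t+1) s
      = ∑ s', ∑ a, condProb M π j t s' * π.q t s' a * M.p t s' a s := rfl

variable {TT : ℕ}

lemma sum_xsa (M : MDP N (TT+2) k) (π : Policy N k) (t : ℕ) (s : Fin N) :
    ∑ a, xsa M π t s a = ∑ j, M.α j * condProb M π j t s := by
  unfold xsa
  rw [Finset.sum_comm]
  refine Finset.sum_congr rfl fun j _ => ?_
  rw [← Finset.mul_sum, π.q_sum t s, mul_one]

lemma xsa_nonneg (M : MDP N (TT+2) k) (π : Policy N k) (t : ℕ) (s : Fin N) (a : Fin (k s)) :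
    0 ≤ xsa M π t s a := by
  apply Finset.sum_nonneg; intro j _
  have := (M.α_pos j).le
  have := condProb_nonneg M π j t s
  have := π.q_nonneg t s a
  positivity

lemma flow (M : MDP N (TT+2) k) (π : Policy N k) (t : ℕ) (j : Fin N) :
    ∑ jq, M.α jq * condProb M π jq (t+1) j
      = ∑ s', ∑ a, M.p t s' a j * xsa M π t s' a := by
  simp only [condProb_succ, Finset.mul_sum, xsa, Finset.sum_mul]
  conv_lhs => rw [Finset.sum_comm]
  refine Finset.sum_congr rfl fun s' _ => ?_
  rw [Finset.sum_comm]
  exact Finset.sum_congr rfl fun a _ => Finset.sum_congr rfl fun jq _ => by ring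

lemma inP_xvec (M : MDP N (TT+2) k) (π : Policy N k) : inP M (xvec M π) := by
  refine ⟨fun t s a => xsa_nonneg M π _ s a, ?_, ?_, ?_, ?_⟩
  · intro s
    show 0 ≤ xT M π s
    apply Finset.sum_nonneg; intro j _
    exact mul_nonneg (M.α_pos j).le (condProb_nonneg M π j _ s)
  · intro j
    show ∑ a, xsa M π 0 j a = M.α j
    rw [sum_xsa]
    simp [condProb_zero]
  · intro t j
    show ∑ a, xsa M π ((t.succ : Fin (TT+1)) : ℕ) j a
        = ∑ s, ∑ a, M.p (t : ℕ) s a j * xsa M π ((t.castSucc : Fin (TT+1)) : ℕ) s a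
    simp only [Fin.val_succ, Fin.coe_castSucc]
    rw [sum_xsa, flow]
  · intro j
    show xT M π j = ∑ s, ∑ a, M.p TT s a j * xsa M π ((Fin.last TT : Fin (TT+1)) : ℕ) s a
    simp only [Fin.val_last]
    unfold xT
    have h2 : (TT + 2 - 1) = TT + 1 := rfl
    rw [h2, flow]

/-- Policy realizing a given frequency vector. -/
noncomputable def mkQ (hk : ∀ s, 1 ≤ k s) (x : FreqSpace N k TT)
    (h0 : ∀ t s a, 0 ≤ x.1 t s a) : Policy N k where
  q t s a :=
    if ht : t < TT+1 then
      (if 0 < ∑ b, x.1 ⟨t, ht⟩ s b then x.1 ⟨t, ht⟩ s a / (∑ b, x.1 ⟨t, ht⟩ s b)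
       else if a = ⟨0, hk s⟩ then 1 else 0)
    else if a = ⟨0, hk s⟩ then 1 else 0
  q_nonneg := by
    intro t s a
    split
    · split
      · exact div_nonneg (h0 _ s a) (by positivity)
      · split <;> norm_num
    · split <;> norm_num
  q_sum := by
    intro t s
    split
    · rename_i ht
      split
      · rename_i hpos
        rw [← Finset.sum_div, div_self (ne_of_gt hpos)]
      · simp
    · simp

lemma denom_mul_q {M : MDP N (TT+2) k} (hk : ∀ s, 1 ≤ k s) (x : FreqSpace N k TT)
    (hx : inP M x) (t : ℕ) (ht : t < TT+1) (s : Fin N) (a : Fin (k s)) :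
    (∑ b, x.1 ⟨t, ht⟩ s b) * (mkQ hk x hx.1).q t s a = x.1 ⟨t, ht⟩ s a := by
  show (∑ b, x.1 ⟨t, ht⟩ s b) *
      (if ht' : t < TT+1 then _ else _) = x.1 ⟨t, ht⟩ s a
  rw [dif_pos ht]
  split
  · rename_i hpos
    rw [mul_div_cancel₀ _ (ne_of_gt hpos)]
  · rename_i hnpos
    have hz : ∑ b, x.1 ⟨t, ht⟩ s b = 0 :=
      le_antisymm (not_lt.mp hnpos) (Finset.sum_nonneg fun b _ => hx.1 _ s b)
    have : x.1 ⟨t, ht⟩ s a = 0 :=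
      (Finset.sum_eq_zero_iff_of_nonneg (fun b _ => hx.1 _ s b)).mp hz a (Finset.mem_univ a)
    rw [hz, this, zero_mul]

lemma mkQ_freq (M : MDP N (TT+2) k) (hk : ∀ s, 1 ≤ k s) (x : FreqSpace N k TT)
    (hx : inP M x) :
    ∀ t, t ≤ TT+1 → ∀ s, ∑ j, M.α j * condProb M (mkQ hk x hx.1) j t s
      = if ht : t < TT+1 then ∑ b, x.1 ⟨t, ht⟩ s b else x.2 s := by
  intro t
  induction t with
  | zero =>
      intro _ s
      rw [dif_pos (Nat.succ_pos TT)]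
      simp only [condProb_zero]
      simp [hx.2.2.1 s]
  | succ t ih =>
      intro ht1 s
      have htT : t < TT + 1 := lt_of_lt_of_le (Nat.lt_succ_self t) ht1
      rw [flow]
      have hxsa : ∀ (s' : Fin N) (a : Fin (k s')),
          xsa M (mkQ hk x hx.1) t s' a = x.1 ⟨t, htT⟩ s' a := by
        intro s' a
        unfold xsa
        rw [← Finset.sum_mul]
        have h1 := ih (le_of_lt htT) s'
        rw [dif_pos htT] at h1
        rw [h1, denom_mul_q hk x hx t htT s' a]
      simp only [hxsa]
      rcases Nat.lt_or_ge (t+1) (TT+1) with h | h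
      · rw [dif_pos h]
        have tlt : t < TT := by omega
        have := hx.2.2.2.1 ⟨t, tlt⟩ s
        exact this.symm
      · rw [dif_neg (by omega)]
        have : t = TT := by omega
        subst this
        exact (hx.2.2.2.2 s).symm

lemma exists_policy (M : MDP N (TT+2) k) (hk : ∀ s, 1 ≤ k s) (x : FreqSpace N k TT)
    (hx : inP M x) : ∃ π' : Policy N k, xvec M π' = x := by
  refine ⟨mkQ hk x hx.1, ?_⟩
  unfold xvec
  refine Prod.ext ?_ ?_
  · funext t s a
    show xsa M (mkQ hk x hx.1) (t : ℕ) s a = x.1 t s a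
    unfold xsa
    rw [← Finset.sum_mul]
    have h1 := mkQ_freq M hk x hx (t : ℕ) (le_of_lt t.isLt) s
    rw [dif_pos t.isLt] at h1
    have hmk : (⟨(t : ℕ), t.isLt⟩ : Fin (TT+1)) = t := Fin.eta t t.isLt
    have h3 := denom_mul_q hk x hx (t : ℕ) t.isLt s a
    rw [hmk] at h1 h3
    rw [h1, h3]
  · funext s
    show xT M (mkQ hk x hx.1) s = x.2 s
    unfold xT
    have h2 : (TT + 2 - 1) = TT + 1 := rfl
    rw [h2]
    have h1 := mkQ_freq M hk x hx (TT+1) (le_refl _) s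
    rw [dif_neg (lt_irrefl _)] at h1
    exact h1

lemma Lval_apply {kk : ℕ} (R : ℕ → (s : Fin N) → Fin (k s) → Fin kk → ℝ)
    (RT : Fin N → Fin kk → ℝ) (x : FreqSpace N k TT) (i : Fin kk) :
    Lval R RT x i = (∑ t : Fin (TT+1), ∑ s, ∑ a, x.1 t s a * R (t : ℕ) s a i)
      + ∑ s, x.2 s * RT s i := by
  unfold Lval
  simp [Finset.sum_apply, Pi.smul_apply, smul_eq_mul]

lemma comp1 (a b : ℝ) (x y : FreqSpace N k TT) (t : Fin (TT+1)) (s : Fin N) (c : Fin (k s)) :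
    (a • x + b • y).1 t s c = a * x.1 t s c + b * y.1 t s c := rfl

lemma comp2 (a b : ℝ) (x y : FreqSpace N k TT) (s : Fin N) :
    (a • x + b • y).2 s = a * x.2 s + b * y.2 s := rfl

lemma Lval_combo {kk : ℕ} (R : ℕ → (s : Fin N) → Fin (k s) → Fin kk → ℝ)
    (RT : Fin N → Fin kk → ℝ) (a b : ℝ) (x y : FreqSpace N k TT) (i : Fin kk) :
    Lval R RT (a • x + b • y) i = a * Lval R RT x i + b * Lval R RT y i := by
  have e1 : ∀ (t : Fin (TT+1)) (s : Fin N) (c : Fin (k s)),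
      (a • x + b • y).1 t s c * R (t : ℕ) s c i
        = a * (x.1 t s c * R (t : ℕ) s c i) + b * (y.1 t s c * R (t : ℕ) s c i) := by
    intro t s c; rw [comp1]; ring
  have e2 : ∀ s, (a • x + b • y).2 s * RT s i
      = a * (x.2 s * RT s i) + b * (y.2 s * RT s i) := by
    intro s; rw [comp2]; ring
  simp only [Lval_apply, e1, e2, Finset.sum_add_distrib, ← Finset.mul_sum]
  ring

lemma convex_Pset (M : MDP N (TT+2) k) : Convex ℝ (Pset M) := by
  rintro x hx y hy a b ha hb hab
  obtain ⟨hx1, hx2, hx3, hx4, hx5⟩ := hx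
  obtain ⟨hy1, hy2, hy3, hy4, hy5⟩ := hy
  refine ⟨?_, ?_, ?_, ?_, ?_⟩
  · intro t s c
    rw [comp1]
    exact add_nonneg (mul_nonneg ha (hx1 t s c)) (mul_nonneg hb (hy1 t s c))
  · intro s
    rw [comp2]
    exact add_nonneg (mul_nonneg ha (hx2 s)) (mul_nonneg hb (hy2 s))
  · intro j
    simp only [comp1, Finset.sum_add_distrib, ← Finset.mul_sum, hx3 j, hy3 j]
    rw [← add_mul, hab, one_mul]
  · intro t j
    have e1 : ∀ (s : Fin N) (c : Fin (k s)),
        M.p (t : ℕ) s c j * (a * x.1 t.castSucc s c + b * y.1 t.castSucc s c)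
          = a * (M.p (t : ℕ) s c j * x.1 t.castSucc s c)
            + b * (M.p (t : ℕ) s c j * y.1 t.castSucc s c) := by
      intro s c; ring
    simp only [comp1, e1, Finset.sum_add_distrib, ← Finset.mul_sum, hx4 t j, hy4 t j]
  · intro j
    have e1 : ∀ (s : Fin N) (c : Fin (k s)),
        M.p TT s c j * (a * x.1 (Fin.last TT) s c + b * y.1 (Fin.last TT) s c)
          = a * (M.p TT s c j * x.1 (Fin.last TT) s c)
            + b * (M.p TT s c j * y.1 (Fin.last TT) s c) := by
      intro s c; ring
    simp only [comp1, comp2, e1, Finset.sum_add_distrib, ← Finset.mul_sum, hx5 j, hy5 j]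

/-- Replace the whole time-`t₀` decision kernel of a policy. -/
def updT (π : Policy N k) (t₀ : ℕ) (r : ∀ s, Fin (k s) → ℝ)
    (h0 : ∀ s a, 0 ≤ r s a) (h1 : ∀ s, ∑ a, r s a = 1) : Policy N k where
  q t s a := if t = t₀ then r s a else π.q t s a
  q_nonneg := by
    intro t s a; split
    · exact h0 s a
    · exact π.q_nonneg t s a
  q_sum := by
    intro t s; split
    · exact h1 s
    · exact π.q_sum t s

lemma updT_q (π : Policy N k) (t₀ : ℕ) (r : ∀ s, Fin (k s) → ℝ) (h0 h1) (t : ℕ)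
    (s : Fin N) (a : Fin (k s)) :
    (updT π t₀ r h0 h1).q t s a = if t = t₀ then r s a else π.q t s a := rfl

def detRow (f : ∀ s, Fin (k s)) : ∀ s, Fin (k s) → ℝ :=
  fun s a => if a = f s then 1 else 0

lemma detRow_nonneg (f : ∀ s, Fin (k s)) : ∀ s a, 0 ≤ detRow f s a := by
  intro s a; unfold detRow; split <;> norm_num

lemma detRow_sum (f : ∀ s, Fin (k s)) : ∀ s, ∑ a, detRow f s a = 1 := by
  intro s; simp [detRow]

lemma sum_w (r : ∀ s : Fin N, Fin (k s) → ℝ) (h1 : ∀ s, ∑ a, r s a = 1) :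
    ∑ f : ∀ s, Fin (k s), ∏ s', r s' (f s') = 1 := by
  rw [← Fintype.piFinset_univ, ← Finset.prod_univ_sum]
  simp [h1]

lemma w_detRow (r : ∀ s : Fin N, Fin (k s) → ℝ) (h1 : ∀ s, ∑ a, r s a = 1)
    (s : Fin N) (a : Fin (k s)) :
    ∑ f : ∀ s, Fin (k s), (∏ s', r s' (f s')) * detRow f s a = r s a := by
  classical
  set r' : ∀ s', Fin (k s') → ℝ :=
    Function.update r s (fun b => if b = a then r s b else 0) with hr'
  have hpoint : ∀ f : ∀ s, Fin (k s),
      (∏ s', r s' (f s')) * detRow f s a = ∏ s', r' s' (f s') := by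
    intro f
    rw [← Finset.prod_mul_prod_compl {s} , ← Finset.prod_mul_prod_compl {s}
      (fun s' => r' s' (f s'))]
    have hcompl : ∀ s' ∈ ({s} : Finset (Fin N))ᶜ, r' s' (f s') = r s' (f s') := by
      intro s' hs'
      have : s' ≠ s := by simpa using hs'
      rw [hr', Function.update_of_ne this]
    rw [Finset.prod_congr rfl hcompl, Finset.prod_singleton, Finset.prod_singleton]
    have hs : r' s (f s) = if f s = a then r s (f s) else 0 := by
      rw [hr', Function.update_self]
    rw [hs]
    unfold detRow
    by_cases hfa : f s = a
    · subst hfa; simp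
    · rw [if_neg hfa, if_neg (fun h => hfa h.symm)]
      ring
  rw [Finset.sum_congr rfl fun f _ => hpoint f]
  rw [← Fintype.piFinset_univ, ← Finset.prod_univ_sum]
  have hsum : ∀ s', ∑ b, r' s' b = if s' = s then r s a else 1 := by
    intro s'
    by_cases hss : s' = s
    · subst hss
      rw [if_pos rfl, hr']
      simp [Function.update_self]
    · rw [if_neg hss, hr', Function.update_of_ne hss, h1 s']
  rw [Finset.prod_congr rfl fun s' _ => hsum s']
  simp

lemma condProb_mixture (M : MDP N T k) (π : Policy N k) (t₀ : ℕ)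
    (r : ∀ s, Fin (k s) → ℝ) (h0 : ∀ s a, 0 ≤ r s a) (h1 : ∀ s, ∑ a, r s a = 1)
    (j : Fin N) :
    ∀ t s, condProb M (updT π t₀ r h0 h1) j t s
      = ∑ f : ∀ s, Fin (k s), (∏ s', r s' (f s')) *
          condProb M (updT π t₀ (detRow f) (detRow_nonneg f) (detRow_sum f)) j t s := by
  intro t
  induction t with
  | zero =>
      intro s
      simp only [condProb_zero, ← Finset.sum_mul, sum_w r h1, one_mul]
  | succ t ih =>
      intro s
      simp only [condProb_succ]
      by_cases htt : t = t₀
      · subst htt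
        have hcongr : ∀ (f : ∀ s, Fin (k s)) (s' : Fin N),
            condProb M (updT π t (detRow f) (detRow_nonneg f) (detRow_sum f)) j t s'
              = condProb M (updT π t r h0 h1) j t s' := by
          intro f s'
          apply condProb_congr
          intro t' s'' a ht'
          rw [updT_q, updT_q, if_neg (Nat.ne_of_lt ht'), if_neg (Nat.ne_of_lt ht')]
        conv_rhs => simp only [Finset.mul_sum]
        conv_rhs => rw [Finset.sum_comm]
        refine Finset.sum_congr rfl fun s' _ => ?_
        conv_rhs => rw [Finset.sum_comm]
        refine Finset.sum_congr rfl fun a _ => ?_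
        simp only [hcongr, updT_q, if_pos rfl]
        set C := condProb M (updT π t r h0 h1) j t s' with hC
        calc C * r s' a * M.p t s' a s
            = (∑ f : ∀ s, Fin (k s), (∏ s'', r s'' (f s'')) * detRow f s' a)
                * (C * M.p t s' a s) := by rw [w_detRow r h1 s' a]; ring
          _ = ∑ f : ∀ s, Fin (k s),
                ((∏ s'', r s'' (f s'')) * detRow f s' a) * (C * M.p t s' a s) := by
                rw [Finset.sum_mul]
          _ = ∑ f : ∀ s, Fin (k s),
                (∏ s'', r s'' (f s'')) * (C * detRow f s' a * M.p t s' a s) :=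
                Finset.sum_congr rfl fun f _ => by ring
      · have hq : ∀ (ρ : ∀ s, Fin (k s) → ℝ) (hh0 : ∀ s a, 0 ≤ ρ s a)
            (hh1 : ∀ s, ∑ a, ρ s a = 1) (s' : Fin N) (a : Fin (k s')),
            (updT π t₀ ρ hh0 hh1).q t s' a = π.q t s' a := by
          intro ρ hh0 hh1 s' a
          rw [updT_q, if_neg htt]
        simp only [hq, ih]
        conv_rhs => simp only [Finset.mul_sum]
        conv_rhs => rw [Finset.sum_comm]
        refine Finset.sum_congr rfl fun s' _ => ?_
        conv_rhs => rw [Finset.sum_comm]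
        refine Finset.sum_congr rfl fun a _ => ?_
        rw [Finset.sum_mul, Finset.sum_mul]
        exact Finset.sum_congr rfl fun f _ => by ring

lemma xvec_congr (M : MDP N (TT+2) k) (π₁ π₂ : Policy N k)
    (h : ∀ t s a, t ≤ TT → π₁.q t s a = π₂.q t s a) : xvec M π₁ = xvec M π₂ := by
  have hcp : ∀ t, t ≤ TT+1 → ∀ j s, condProb M π₁ j t s = condProb M π₂ j t s := by
    intro t ht j s
    apply condProb_congr
    intro t' s' a ht'
    exact h t' s' a (by omega)
  refine Prod.ext ?_ ?_
  · funext t s a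
    show xsa M π₁ (t : ℕ) s a = xsa M π₂ (t : ℕ) s a
    have htle : (t : ℕ) ≤ TT := Nat.lt_succ_iff.mp t.isLt
    unfold xsa
    refine Finset.sum_congr rfl fun j _ => ?_
    rw [hcp (t : ℕ) (by omega) j s, h (t : ℕ) s a htle]
  · funext s
    show xT M π₁ s = xT M π₂ s
    unfold xT
    refine Finset.sum_congr rfl fun j _ => ?_
    show M.α j * condProb M π₁ j (TT+1) s = M.α j * condProb M π₂ j (TT+1) s
    rw [hcp _ (le_refl (TT+1)) j s]

lemma sum_freq_fst {ι : Type*} [Fintype ι] (z : ι → FreqSpace N k TT)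
    (t : Fin (TT+1)) (s : Fin N) (a : Fin (k s)) :
    (∑ i, z i).1 t s a = ∑ i, (z i).1 t s a := by
  rw [Prod.fst_sum]
  simp [Finset.sum_apply]

lemma sum_freq_snd {ι : Type*} [Fintype ι] (z : ι → FreqSpace N k TT) (s : Fin N) :
    (∑ i, z i).2 s = ∑ i, (z i).2 s := by
  rw [Prod.snd_sum]
  simp [Finset.sum_apply]

lemma smul_freq_fst (c : ℝ) (z : FreqSpace N k TT) (t : Fin (TT+1)) (s : Fin N)
    (a : Fin (k s)) : (c • z).1 t s a = c * z.1 t s a := rfl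

lemma smul_freq_snd (c : ℝ) (z : FreqSpace N k TT) (s : Fin N) :
    (c • z).2 s = c * z.2 s := rfl

lemma xvec_mixture (M : MDP N (TT+2) k) (π : Policy N k) (t₀ : ℕ)
    (r : ∀ s, Fin (k s) → ℝ) (h0 : ∀ s a, 0 ≤ r s a) (h1 : ∀ s, ∑ a, r s a = 1) :
    xvec M (updT π t₀ r h0 h1)
      = ∑ f : ∀ s, Fin (k s), (∏ s', r s' (f s')) •
          xvec M (updT π t₀ (detRow f) (detRow_nonneg f) (detRow_sum f)) := by
  refine Prod.ext ?_ ?_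
  · funext t s a
    rw [sum_freq_fst]
    show xsa M (updT π t₀ r h0 h1) (t : ℕ) s a = _
    rw [Finset.sum_congr rfl fun f _ => smul_freq_fst _ _ t s a]
    show _ = ∑ f : ∀ s, Fin (k s), (∏ s', r s' (f s')) *
      xsa M (updT π t₀ (detRow f) (detRow_nonneg f) (detRow_sum f)) (t : ℕ) s a
    unfold xsa
    conv_rhs => simp only [Finset.mul_sum]
    conv_rhs => rw [Finset.sum_comm]
    refine Finset.sum_congr rfl fun j _ => ?_
    by_cases ht0 : (t : ℕ) = t₀
    · subst ht0
      have hcongr : ∀ (f : ∀ s, Fin (k s)) (s' : Fin N),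
          condProb M (updT π (t : ℕ) (detRow f) (detRow_nonneg f) (detRow_sum f)) j (t : ℕ) s'
            = condProb M (updT π (t : ℕ) r h0 h1) j (t : ℕ) s' := by
        intro f s'
        apply condProb_congr
        intro t' s'' a' ht'
        rw [updT_q, updT_q, if_neg (Nat.ne_of_lt ht'), if_neg (Nat.ne_of_lt ht')]
      simp only [hcongr, updT_q, if_pos rfl]
      set C := condProb M (updT π (t : ℕ) r h0 h1) j (t : ℕ) s with hC
      calc M.α j * C * r s a
          = (∑ f : ∀ s, Fin (k s), (∏ s'', r s'' (f s'')) * detRow f s a)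
              * (M.α j * C) := by rw [w_detRow r h1 s a]; ring
        _ = ∑ f : ∀ s, Fin (k s),
              ((∏ s'', r s'' (f s'')) * detRow f s a) * (M.α j * C) := by
              rw [Finset.sum_mul]
        _ = ∑ f : ∀ s, Fin (k s),
              (∏ s'', r s'' (f s'')) * (M.α j * C * detRow f s a) :=
              Finset.sum_congr rfl fun f _ => by ring
    · simp only [updT_q, if_neg ht0]
      rw [condProb_mixture M π t₀ r h0 h1 j (t : ℕ) s]
      simp only [Finset.mul_sum, Finset.sum_mul]
      exact Finset.sum_congr rfl fun f _ => by ring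
  · funext s
    rw [sum_freq_snd]
    show xT M (updT π t₀ r h0 h1) s = _
    rw [Finset.sum_congr rfl fun f _ => smul_freq_snd _ _ s]
    show _ = ∑ f : ∀ s, Fin (k s), (∏ s', r s' (f s')) *
      xT M (updT π t₀ (detRow f) (detRow_nonneg f) (detRow_sum f)) s
    unfold xT
    conv_rhs => simp only [Finset.mul_sum]
    conv_rhs => rw [Finset.sum_comm]
    refine Finset.sum_congr rfl fun j _ => ?_
    rw [condProb_mixture M π t₀ r h0 h1 j (TT+2-1) s]
    simp only [Finset.mul_sum, Finset.sum_mul]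
    exact Finset.sum_congr rfl fun f _ => by ring

/-- The policy following the deterministic table `g` for the first `m` epochs, then `π`. -/
def πseq (π : Policy N k) (m : ℕ) (g : Fin m → ∀ s, Fin (k s)) : Policy N k where
  q t s a := if h : t < m then (if a = g ⟨t, h⟩ s then 1 else 0) else π.q t s a
  q_nonneg := by
    intro t s a; split
    · split <;> norm_num
    · exact π.q_nonneg t s a
  q_sum := by
    intro t s; split
    · simp
    · exact π.q_sum t s

lemma πseq_q (π : Policy N k) (m : ℕ) (g : Fin m → ∀ s, Fin (k s)) (t : ℕ) (s : Fin N)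
    (a : Fin (k s)) :
    (πseq π m g).q t s a = if h : t < m then (if a = g ⟨t, h⟩ s then 1 else 0)
      else π.q t s a := rfl

lemma iter_hull (M : MDP N (TT+2) k) (π : Policy N k) :
    ∀ m : ℕ, xvec M π ∈ convexHull ℝ
      (Set.range fun g : Fin m → ∀ s, Fin (k s) => xvec M (πseq π m g)) := by
  intro m
  induction m with
  | zero =>
      apply subset_convexHull
      refine ⟨fun i => i.elim0, ?_⟩
      apply xvec_congr
      intro t s a _
      rw [πseq_q, dif_neg (Nat.not_lt_zero t)]
  | succ m ih =>
      have hsub : (Set.range fun g : Fin m → ∀ s, Fin (k s) => xvec M (πseq π m g)) ⊆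
          convexHull ℝ (Set.range fun g : Fin (m+1) → ∀ s, Fin (k s) =>
            xvec M (πseq π (m+1) g)) := by
        rintro _ ⟨g, rfl⟩
        show xvec M (πseq π m g) ∈ _
        have h₁ : xvec M (πseq π m g) = xvec M (updT (πseq π m g) m (fun s => π.q m s)
            (fun s a => π.q_nonneg m s a) (fun s => π.q_sum m s)) := by
          apply xvec_congr
          intro t s a _
          rw [updT_q]
          split
          · rename_i h
            rw [πseq_q, dif_neg (by omega : ¬ t < m), h]
          · rfl
        rw [h₁, xvec_mixture]
        apply (convex_convexHull ℝ _).sum_mem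
        · intro f _
          exact Finset.prod_nonneg fun s' _ => π.q_nonneg m s' (f s')
        · exact sum_w _ (fun s => π.q_sum m s)
        · intro f _
          apply subset_convexHull
          refine ⟨Fin.snoc g f, ?_⟩
          apply xvec_congr
          intro t s a _
          rw [πseq_q, updT_q]
          by_cases htm : t = m
          · have hlt : t < m + 1 := by omega
            rw [if_pos htm, dif_pos hlt]
            have heq : (⟨t, hlt⟩ : Fin (m+1)) = Fin.last m := Fin.ext (by simpa using htm)
            rw [heq, Fin.snoc_last]
            rfl
          · rw [if_neg htm, πseq_q]
            by_cases htm' : t < m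
            · rw [dif_pos htm', dif_pos (htm'.trans (Nat.lt_succ_self m))]
              have hcast : (⟨t, htm'.trans (Nat.lt_succ_self m)⟩ : Fin (m+1))
                  = (⟨t, htm'⟩ : Fin m).castSucc := rfl
              rw [hcast, Fin.snoc_castSucc]
            · rw [dif_neg htm', dif_neg (by omega)]
      exact convexHull_min hsub (convex_convexHull ℝ _) ih

lemma Pset_subset_hull (M : MDP N (TT+2) k) (hk : ∀ s, 1 ≤ k s) (π : Policy N k) :
    Pset M ⊆ convexHull ℝ
      (Set.range fun g : Fin (TT+1) → ∀ s, Fin (k s) => xvec M (πseq π (TT+1) g)) := by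
  intro x hx
  obtain ⟨π', rfl⟩ := exists_policy M hk x hx
  have hmem := iter_hull M π' (TT+1)
  have hrange : (Set.range fun g : Fin (TT+1) → ∀ s, Fin (k s) => xvec M (πseq π' (TT+1) g))
      = (Set.range fun g : Fin (TT+1) → ∀ s, Fin (k s) => xvec M (πseq π (TT+1) g)) := by
    have : ∀ g, xvec M (πseq π' (TT+1) g) = xvec M (πseq π (TT+1) g) := by
      intro g
      apply xvec_congr
      intro t s a ht
      rw [πseq_q, πseq_q, dif_pos (Nat.lt_succ_of_le ht), dif_pos (Nat.lt_succ_of_le ht)]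
    exact congrArg Set.range (funext this)
  rwa [hrange] at hmem

end Aux

section Farkas

open RealInnerProductSpace

variable {n : ℕ} {ι : Type*} [Fintype ι]

/-- The cone generated by a finite family of vectors. -/
def coneSet (g : ι → EuclideanSpace ℝ (Fin n)) : Set (EuclideanSpace ℝ (Fin n)) :=
  {v | ∃ lam : ι → ℝ, (∀ i, 0 ≤ lam i) ∧ v = ∑ i, lam i • g i}

lemma cone_rep_indep (g : ι → EuclideanSpace ℝ (Fin n)) (v : EuclideanSpace ℝ (Fin n))
    (hv : v ∈ coneSet g) :
    ∃ S : Finset ι, LinearIndependent ℝ (fun i : S => g i) ∧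
      ∃ lam : ι → ℝ, (∀ i, 0 ≤ lam i) ∧ (∀ i ∉ S, lam i = 0) ∧ v = ∑ i, lam i • g i := by
  classical
  obtain ⟨lam, hlam0, hrep⟩ := hv
  suffices H : ∀ (m : ℕ) (S : Finset ι) (lam : ι → ℝ), S.card ≤ m → (∀ i, 0 ≤ lam i) →
      (∀ i ∉ S, lam i = 0) → ∃ S' : Finset ι, LinearIndependent ℝ (fun i : S' => g i) ∧
      ∃ lam' : ι → ℝ, (∀ i, 0 ≤ lam' i) ∧ (∀ i ∉ S', lam' i = 0) ∧
        ∑ i, lam' i • g i = ∑ i, lam i • g i by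
    obtain ⟨S', hind, lam', h0, hsupp, heq⟩ :=
      H Finset.univ.card Finset.univ lam (le_refl _) hlam0 (by simp)
    exact ⟨S', hind, lam', h0, hsupp, by rw [hrep, ← heq]⟩
  intro m
  induction m with
  | zero =>
      intro S lam hcard h0 hsupp
      have hS : S = ∅ := Finset.card_eq_zero.mp (Nat.le_zero.mp hcard)
      subst hS
      refine ⟨∅, ?_, lam, h0, hsupp, rfl⟩
      exact linearIndependent_empty_type
  | succ m ih =>
      intro S lam hcard h0 hsupp
      by_cases hind : LinearIndependent ℝ (fun i : S => g i)
      · exact ⟨S, hind, lam, h0, hsupp, rfl⟩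
      obtain ⟨c, hcsum, i₀, hci₀⟩ := Fintype.not_linearIndependent_iff.mp hind
      -- extend `c` to `ι`, with the right sign
      have key : ∀ d : ι → ℝ, (∀ i ∉ S, d i = 0) → (∑ i, d i • g i = 0) →
          (∃ i, 0 < d i) → ∃ S' : Finset ι, LinearIndependent ℝ (fun i : S' => g i) ∧
          ∃ lam' : ι → ℝ, (∀ i, 0 ≤ lam' i) ∧ (∀ i ∉ S', lam' i = 0) ∧
            ∑ i, lam' i • g i = ∑ i, lam i • g i := by
        intro d hdsupp hdsum hdpos
        set T : Finset ι := S.filter (fun i => 0 < d i) with hT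
        have hTne : T.Nonempty := by
          obtain ⟨i, hi⟩ := hdpos
          have hiS : i ∈ S := by
            by_contra hiS
            rw [hdsupp i hiS] at hi
            exact lt_irrefl 0 hi
          exact ⟨i, Finset.mem_filter.mpr ⟨hiS, hi⟩⟩
        obtain ⟨i₁, hi₁T, hi₁min⟩ := Finset.exists_min_image T (fun i => lam i / d i) hTne
        have hi₁S : i₁ ∈ S := (Finset.mem_filter.mp hi₁T).1
        have hdi₁ : 0 < d i₁ := (Finset.mem_filter.mp hi₁T).2
        set τ : ℝ := lam i₁ / d i₁ with hτ
        have hτ0 : 0 ≤ τ := div_nonneg (h0 i₁) hdi₁.le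
        set lam' : ι → ℝ := fun i => lam i - τ * d i with hlam'
        have hlam'0 : ∀ i, 0 ≤ lam' i := by
          intro i
          by_cases hiT : i ∈ T
          · have hdi : 0 < d i := (Finset.mem_filter.mp hiT).2
            have := hi₁min i hiT
            have := (le_div_iff₀ hdi).mp this
            simp only [hlam']
            linarith
          · have hdi : d i ≤ 0 := by
              by_cases hiS : i ∈ S
              · by_contra hdi
                push_neg at hdi
                exact hiT (Finset.mem_filter.mpr ⟨hiS, hdi⟩)
              · rw [hdsupp i hiS]
            simp only [hlam']
            nlinarith [h0 i]
        have hsupp' : ∀ i ∉ S.erase i₁, lam' i = 0 := by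
          intro i hi
          simp only [hlam']
          by_cases hii : i = i₁
          · rw [hii, hτ, div_mul_cancel₀ _ (ne_of_gt hdi₁), sub_self]
          · have hiS : i ∉ S := fun hiS => hi (Finset.mem_erase.mpr ⟨hii, hiS⟩)
            rw [hsupp i hiS, hdsupp i hiS, mul_zero, sub_zero]
        have hsum' : ∑ i, lam' i • g i = ∑ i, lam i • g i := by
          simp only [hlam', sub_smul, Finset.sum_sub_distrib, mul_smul]
          rw [← Finset.smul_sum, hdsum, smul_zero, sub_zero]
        have hcard' : (S.erase i₁).card ≤ m := by
          rw [Finset.card_erase_of_mem hi₁S]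
          omega
        obtain ⟨S', hindep, lam'', h0'', hsupp'', heq''⟩ := ih (S.erase i₁) lam' hcard' hlam'0 hsupp'
        exact ⟨S', hindep, lam'', h0'', hsupp'', by rw [heq'', hsum']⟩
      set cc : ι → ℝ := fun i => if h : i ∈ S then c ⟨i, h⟩ else 0 with hcc
      have hccsupp : ∀ i ∉ S, cc i = 0 := by
        intro i hi; simp only [hcc]; rw [dif_neg hi]
      have hccsum : ∑ i, cc i • g i = 0 := by
        have h1 : ∑ i, cc i • g i = ∑ i ∈ S, cc i • g i :=
          (Finset.sum_subset (Finset.subset_univ S)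
            (fun i _ hiS => by rw [hccsupp i hiS, zero_smul])).symm
        rw [h1, ← Finset.sum_attach S (fun i => cc i • g i), ← hcsum, Finset.univ_eq_attach]
        refine Finset.sum_congr rfl fun i _ => ?_
        simp only [hcc]
        rw [dif_pos i.2, Subtype.coe_eta]
      by_cases hpos : ∃ i, 0 < cc i
      · exact key cc hccsupp hccsum hpos
      · refine key (fun i => -cc i) (fun i hi => by show -cc i = 0; rw [hccsupp i hi, neg_zero])
          (by simp only [neg_smul, Finset.sum_neg_distrib, hccsum, neg_zero]) ?_
        push_neg at hpos
        refine ⟨(i₀ : ι), ?_⟩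
        show 0 < -cc (i₀ : ι)
        have hceq : cc (i₀ : ι) = c i₀ := by
          simp only [hcc]
          rw [dif_pos i₀.2, Subtype.coe_eta]
        have hle := hpos (i₀ : ι)
        have hne0 : cc (i₀ : ι) ≠ 0 := by rw [hceq]; exact hci₀
        have hlt := lt_of_le_of_ne hle hne0
        linarith

lemma euclid_sum_apply {n : ℕ} {κ : Type*} (s : Finset κ) (u : κ → EuclideanSpace ℝ (Fin n))
    (j : Fin n) : (∑ i ∈ s, u i) j = ∑ i ∈ s, u i j := by
  induction s using Finset.cons_induction with
  | empty => rfl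
  | cons a s ha ih => rw [Finset.sum_cons, Finset.sum_cons, PiLp.add_apply, ih]

lemma isClosed_coneSet (g : ι → EuclideanSpace ℝ (Fin n)) : IsClosed (coneSet g) := by
  classical
  have hunion : coneSet g = ⋃ (S : Finset ι) (_ : LinearIndependent ℝ (fun i : S => g i)),
      (fun mu : (S → ℝ) => ∑ i : S, mu i • g (i : ι)) '' {mu | ∀ i, 0 ≤ mu i} := by
    ext v
    constructor
    · intro hv
      obtain ⟨S, hind, lam, h0, hsupp, hrep⟩ := cone_rep_indep g v hv
      refine Set.mem_iUnion.mpr ⟨S, Set.mem_iUnion.mpr ⟨hind, ?_⟩⟩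
      refine ⟨fun i => lam i, fun i => h0 i, ?_⟩
      show ∑ i : S, lam (i : ι) • g (i : ι) = v
      rw [hrep, Finset.univ_eq_attach, Finset.sum_attach S (fun i => lam i • g i)]
      exact Finset.sum_subset (Finset.subset_univ S)
        (fun i _ hiS => by rw [hsupp i hiS, zero_smul])
    · intro hv
      obtain ⟨S, hS⟩ := Set.mem_iUnion.mp hv
      obtain ⟨hind, hv'⟩ := Set.mem_iUnion.mp hS
      obtain ⟨mu, hmu0, hrep⟩ := hv'
      refine ⟨fun i => if h : i ∈ S then mu ⟨i, h⟩ else 0, ?_, ?_⟩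
      · intro i
        show 0 ≤ if h : i ∈ S then mu ⟨i, h⟩ else 0
        split
        · exact hmu0 _
        · exact le_refl 0
      · rw [← hrep]
        have h1 : ∑ i, (if h : i ∈ S then mu ⟨i, h⟩ else 0) • g i
            = ∑ i ∈ S, (if h : i ∈ S then mu ⟨i, h⟩ else 0) • g i :=
          (Finset.sum_subset (Finset.subset_univ S)
            (fun i _ hiS => by rw [dif_neg hiS, zero_smul])).symm
        rw [h1, ← Finset.sum_attach S
          (fun i => (if h : i ∈ S then mu ⟨i, h⟩ else 0) • g i), Finset.univ_eq_attach]
        symm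
        refine Finset.sum_congr rfl fun i _ => ?_
        rw [dif_pos i.2, Subtype.coe_eta]
  rw [hunion]
  refine isClosed_iUnion_of_finite fun S => isClosed_iUnion_of_finite fun hind => ?_
  set T : (S → ℝ) →ₗ[ℝ] EuclideanSpace ℝ (Fin n) :=
    { toFun := fun mu => ∑ i : S, mu i • g (i : ι)
      map_add' := by
        intro a b
        simp only [Pi.add_apply, add_smul, Finset.sum_add_distrib]
      map_smul' := by
        intro c a
        simp only [Pi.smul_apply, smul_eq_mul, mul_smul, RingHom.id_apply, ← Finset.smul_sum] }
    with hT
  have hfun : (fun mu : (S → ℝ) => ∑ i : S, mu i • g (i : ι)) = ⇑T := rfl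
  rw [hfun]
  have hker : LinearMap.ker T = ⊥ := by
    rw [LinearMap.ker_eq_bot']
    intro mu hmu
    have hz : ∑ i : S, mu i • g (i : ι) = 0 := hmu
    exact funext fun i => Fintype.linearIndependent_iff.mp hind mu hz i
  have hemb := LinearMap.isClosedEmbedding_of_injective hker
  have horth : IsClosed {mu : S → ℝ | ∀ i, 0 ≤ mu i} := by
    have hset : {mu : S → ℝ | ∀ i, 0 ≤ mu i} = Set.pi Set.univ (fun _ => Set.Ici (0:ℝ)) := by
      ext mu
      simp only [Set.mem_setOf_eq, Set.mem_pi, Set.mem_univ, Set.mem_Ici, forall_true_left]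
    rw [hset]
    exact isClosed_set_pi fun i _ => isClosed_Ici
  exact hemb.isClosedMap _ horth

lemma farkas (g : ι → EuclideanSpace ℝ (Fin n)) (b : EuclideanSpace ℝ (Fin n))
    (hb : b ∉ coneSet g) :
    ∃ w : EuclideanSpace ℝ (Fin n), (∀ i, ⟪g i, w⟫ ≤ 0) ∧ 0 < ⟪b, w⟫ := by
  classical
  set K : ConvexCone ℝ (EuclideanSpace ℝ (Fin n)) :=
    { carrier := coneSet g
      smul_mem' := by
        rintro c hc v ⟨lam, h0, rfl⟩
        refine ⟨fun i => c * lam i, fun i => mul_nonneg hc.le (h0 i), ?_⟩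
        rw [Finset.smul_sum]
        exact Finset.sum_congr rfl fun i _ => (mul_smul c (lam i) (g i)).symm
      add_mem' := by
        rintro v ⟨lam, h0, rfl⟩ u ⟨lam', h0', rfl⟩
        refine ⟨fun i => lam i + lam' i, fun i => add_nonneg (h0 i) (h0' i), ?_⟩
        rw [← Finset.sum_add_distrib]
        exact Finset.sum_congr rfl fun i _ => (add_smul _ _ _).symm } with hK
  have hne : (K : Set (EuclideanSpace ℝ (Fin n))).Nonempty :=
    ⟨0, ⟨fun _ => 0, fun _ => le_refl 0, by simp⟩⟩
  have hcl : IsClosed (K : Set (EuclideanSpace ℝ (Fin n))) := isClosed_coneSet g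
  set C : ProperCone ℝ (EuclideanSpace ℝ (Fin n)) :=
    { carrier := coneSet g
      add_mem' := fun {_ _} ha hb => K.add_mem' ha hb
      zero_mem' := ⟨fun _ => 0, fun _ => le_refl 0, by simp⟩
      smul_mem' := by
        rintro c v ⟨lam, h0, rfl⟩
        refine ⟨fun i => (c : ℝ) * lam i, fun i => mul_nonneg c.2 (h0 i), ?_⟩
        rw [Finset.smul_sum]
        exact Finset.sum_congr rfl fun i _ => by rw [mul_smul]; rfl
      isClosed' := hcl } with hC
  obtain ⟨y, hy1, hy2⟩ := C.hyperplane_separation' (x₀ := b) (by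
    intro h
    apply hb
    exact h)
  refine ⟨-y, fun i => ?_, ?_⟩
  · have hgK : g i ∈ K := ⟨fun j => if j = i then 1 else 0,
      fun j => by show (0:ℝ) ≤ if j = i then 1 else 0; split <;> norm_num,
      by simp [ite_smul]⟩
    have := hy1 (g i) (by exact hgK)
    rw [inner_neg_right]
    linarith
  · rw [inner_neg_right]
    linarith

lemma pos_weights (g : ι → EuclideanSpace ℝ (Fin n))
    (hcone : ∀ v ∈ coneSet g, (∀ j, 0 ≤ v j) → v = 0) :
    ∃ w : Fin n → ℝ, (∀ j, 0 < w j) ∧ ∀ i, ∑ j, g i j * w j ≤ 0 := by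
  classical
  set G : ι ⊕ Fin n → EuclideanSpace ℝ (Fin n) :=
    Sum.elim g (fun j => -(EuclideanSpace.single j (1:ℝ))) with hG
  have hGcone : ∀ j₀ : Fin n,
      (EuclideanSpace.single j₀ (1:ℝ) : EuclideanSpace ℝ (Fin n)) ∉ coneSet G := by
    intro j₀ hmem
    obtain ⟨lam, h0, hrep⟩ := hmem
    rw [Fintype.sum_sum_type] at hrep
    simp only [hG, Sum.elim_inl, Sum.elim_inr, smul_neg, ← Finset.sum_neg_distrib] at hrep
    set u : EuclideanSpace ℝ (Fin n) := ∑ i : ι, lam (Sum.inl i) • g i with hu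
    have huc : u ∈ coneSet g := ⟨fun i => lam (Sum.inl i), fun i => h0 _, rfl⟩
    have hueq : u = EuclideanSpace.single j₀ (1:ℝ)
        + ∑ j, lam (Sum.inr j) • EuclideanSpace.single j (1:ℝ) := by
      rw [hrep, Finset.sum_neg_distrib]
      abel
    have hterm : ∀ j' : Fin n,
        0 ≤ (lam (Sum.inr j') • EuclideanSpace.single j' (1:ℝ) : EuclideanSpace ℝ (Fin n)) j₀ := by
      intro j'
      rw [PiLp.smul_apply, EuclideanSpace.single_apply, smul_eq_mul]
      have := h0 (Sum.inr j')
      split <;> nlinarith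
    have hunn : ∀ j, 0 ≤ u j := by
      intro j
      rw [hueq, PiLp.add_apply, euclid_sum_apply]
      apply add_nonneg
      · rw [EuclideanSpace.single_apply]
        split <;> norm_num
      · apply Finset.sum_nonneg
        intro j' _
        rw [PiLp.smul_apply, EuclideanSpace.single_apply, smul_eq_mul]
        have := h0 (Sum.inr j')
        split <;> nlinarith
    have huz := hcone u huc hunn
    have hj₀ : u j₀ = 0 := by rw [huz]; rfl
    rw [hueq, PiLp.add_apply, euclid_sum_apply, EuclideanSpace.single_apply, if_pos rfl] at hj₀
    have hsum : 0 ≤ ∑ j, (lam (Sum.inr j) • EuclideanSpace.single j (1:ℝ) :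
        EuclideanSpace ℝ (Fin n)) j₀ := Finset.sum_nonneg fun j' _ => hterm j'
    linarith
  have hfar := fun j₀ : Fin n => farkas G (EuclideanSpace.single j₀ (1:ℝ)) (hGcone j₀)
  choose W hW1 hW2 using hfar
  have hWnn : ∀ (j₀ j : Fin n), 0 ≤ W j₀ j := by
    intro j₀ j
    have := hW1 j₀ (Sum.inr j)
    have hGr : G (Sum.inr j) = -(EuclideanSpace.single j (1:ℝ)) := rfl
    rw [hGr, inner_neg_left, EuclideanSpace.inner_single_left] at this
    simp only [map_one, one_mul] at this
    linarith
  have hWpos : ∀ j : Fin n, 0 < W j j := by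
    intro j
    have := hW2 j
    rw [EuclideanSpace.inner_single_left] at this
    simpa using this
  refine ⟨fun j => ∑ j₀, W j₀ j, ?_, ?_⟩
  · intro j
    refine Finset.sum_pos' (fun j₀ _ => hWnn j₀ j) ⟨j, Finset.mem_univ j, hWpos j⟩
  · intro i
    have hswap : ∑ j, g i j * ∑ j₀, W j₀ j = ∑ j₀, ∑ j, g i j * W j₀ j := by
      simp only [Finset.mul_sum]
      rw [Finset.sum_comm]
    rw [hswap]
    apply Finset.sum_nonpos
    intro j₀ _
    have := hW1 j₀ (Sum.inl i)
    have hGl : G (Sum.inl i) = g i := rfl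
    rw [hGl, PiLp.inner_apply] at this
    simpa [RCLike.inner_apply, conj_trivial, mul_comm] using this

end Farkas

section Assemble

variable {N : ℕ} {k : Fin N → ℕ} {TT kk : ℕ}

lemma Lval_add (R : ℕ → (s : Fin N) → Fin (k s) → Fin kk → ℝ) (RT : Fin N → Fin kk → ℝ)
    (x y : FreqSpace N k TT) (i : Fin kk) :
    Lval R RT (x + y) i = Lval R RT x i + Lval R RT y i := by
  have h := Lval_combo R RT 1 1 x y i
  rw [one_smul, one_smul] at h
  rw [h, one_mul, one_mul]

lemma Lval_smul (R : ℕ → (s : Fin N) → Fin (k s) → Fin kk → ℝ) (RT : Fin N → Fin kk → ℝ)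
    (c : ℝ) (x : FreqSpace N k TT) (i : Fin kk) :
    Lval R RT (c • x) i = c * Lval R RT x i := by
  have h := Lval_combo R RT c 0 x x i
  rw [zero_smul, add_zero] at h
  rw [h]; ring

lemma Lval_sum (R : ℕ → (s : Fin N) → Fin (k s) → Fin kk → ℝ) (RT : Fin N → Fin kk → ℝ)
    {κ : Type*} (s : Finset κ) (z : κ → FreqSpace N k TT) (i : Fin kk) :
    Lval R RT (∑ g ∈ s, z g) i = ∑ g ∈ s, Lval R RT (z g) i := by
  induction s using Finset.cons_induction with
  | empty =>
      have h := Lval_smul R RT 0 (0 : FreqSpace N k TT) i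
      rw [zero_smul] at h
      simpa using by linarith [h]
  | cons a s ha ih => rw [Finset.sum_cons, Finset.sum_cons, Lval_add, ih]

end Assemble

/-- a policy `π` is efficient for the vector-valued MDP (no policy `π'`
componentwise dominates it with a different value) iff there exist strictly positive
weights `w` such that `x_π` maximizes the scalarized linear objective `∑_i w_i (Cx)_i`
over the state-action frequency polytope `P`. -/
theorem efficient_iff_positively_scalarized (N TT kk : ℕ) (k : Fin N → ℕ)
    (hk : ∀ s, 1 ≤ k s) (M : MDP N (TT+2) k)
    (R : ℕ → (s : Fin N) → Fin (k s) → Fin kk → ℝ) (RT : Fin N → Fin kk → ℝ)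
    (π : Policy N k) :
    (¬ ∃ π' : Policy N k,
        Lval R RT (xvec M π) ≤ Lval R RT (xvec M π') ∧
          Lval R RT (xvec M π') ≠ Lval R RT (xvec M π)) ↔
      ∃ w : Fin kk → ℝ, (∀ i, 0 < w i) ∧
        ∀ x : FreqSpace N k TT, inP M x →
          ∑ i, w i * Lval R RT x i ≤ ∑ i, w i * Lval R RT (xvec M π) i := by
  classical
  constructor
  · -- efficiency implies positive scalarization
    intro heff
    set x0 := xvec M π with hx0
    set xd : (Fin (TT+1) → ∀ s, Fin (k s)) → FreqSpace N k TT :=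
      fun g => xvec M (πseq π (TT+1) g) with hxd
    set gv : (Fin (TT+1) → ∀ s, Fin (k s)) → EuclideanSpace ℝ (Fin kk) :=
      fun g => WithLp.toLp 2 (fun i => Lval R RT (xd g) i - Lval R RT x0 i) with hgv
    have hcone : ∀ v ∈ coneSet gv, (∀ j, 0 ≤ v j) → v = 0 := by
      intro v hv hvnn
      obtain ⟨lam, hlam0, hrep⟩ := hv
      rcases eq_or_lt_of_le (Finset.sum_nonneg (fun g _ => hlam0 g) :
          (0:ℝ) ≤ ∑ g, lam g) with hL0 | hLpos
      · have hall : ∀ g, lam g = 0 := fun g =>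
          (Finset.sum_eq_zero_iff_of_nonneg (fun g _ => hlam0 g)).mp hL0.symm g
            (Finset.mem_univ g)
        rw [hrep]
        exact Finset.sum_eq_zero fun g _ => by rw [hall g, zero_smul]
      · set Λ : ℝ := ∑ g, lam g with hΛ
        set xbar := ∑ g, (lam g / Λ) • xd g with hxbar
        have hxbarP : xbar ∈ Pset M := by
          apply (convex_Pset M).sum_mem (fun g _ => div_nonneg (hlam0 g) hLpos.le)
          · rw [← Finset.sum_div, div_self (ne_of_gt hLpos)]
          · intro g _
            exact inP_xvec M (πseq π (TT+1) g)
        obtain ⟨π', hπ'⟩ := exists_policy M hk xbar hxbarP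
        have hvi : ∀ i, v i = ∑ g, lam g * (Lval R RT (xd g) i - Lval R RT x0 i) := by
          intro i
          rw [hrep, euclid_sum_apply]
          refine Finset.sum_congr rfl fun g _ => ?_
          rw [PiLp.smul_apply, smul_eq_mul]
        have hLxbar : ∀ i, Lval R RT xbar i = Lval R RT x0 i + (1/Λ) * v i := by
          intro i
          rw [hxbar, Lval_sum]
          calc ∑ g, Lval R RT ((lam g / Λ) • xd g) i
              = ∑ g, ((1/Λ) * (lam g * (Lval R RT (xd g) i - Lval R RT x0 i))
                  + (lam g / Λ) * Lval R RT x0 i) := by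
                refine Finset.sum_congr rfl fun g _ => ?_
                rw [Lval_smul]
                field_simp
                ring
            _ = (1/Λ) * (∑ g, lam g * (Lval R RT (xd g) i - Lval R RT x0 i))
                  + (∑ g, lam g / Λ) * Lval R RT x0 i := by
                rw [Finset.sum_add_distrib, Finset.mul_sum, Finset.sum_mul]
            _ = Lval R RT x0 i + (1/Λ) * v i := by
                rw [← hvi i, ← Finset.sum_div, ← hΛ, div_self (ne_of_gt hLpos), one_mul]
                ring
        have hle : Lval R RT x0 ≤ Lval R RT (xvec M π') := by
          rw [hπ']
          intro i
          rw [hLxbar i]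
          have h1 : (0:ℝ) ≤ (1/Λ) * v i :=
            mul_nonneg (by positivity) (hvnn i)
          linarith
        by_contra hvne
        apply heff
        refine ⟨π', hle, ?_⟩
        intro hEq
        apply hvne
        ext i
        have h2 := congrFun hEq i
        rw [hπ'] at h2
        have h3 := hLxbar i
        rw [h2] at h3
        have h4 : (1/Λ) * v i = 0 := by linarith
        have h5 : (1/Λ) ≠ 0 := by positivity
        have := mul_eq_zero.mp h4
        rcases this with h | h
        · exact absurd h h5
        · exact h
    obtain ⟨w, hwpos, hwineq⟩ := pos_weights gv hcone
    refine ⟨w, hwpos, ?_⟩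
    intro x hxP
    have hxhull := Pset_subset_hull M hk π hxP
    have hlin : IsLinearMap ℝ (fun y : FreqSpace N k TT => ∑ i, w i * Lval R RT y i) := by
      constructor
      · intro a b
        simp only [Lval_add, mul_add, Finset.sum_add_distrib]
      · intro c a
        simp only [Lval_smul, smul_eq_mul, Finset.mul_sum]
        exact Finset.sum_congr rfl fun i _ => by ring
    have hhalf : Convex ℝ {y : FreqSpace N k TT |
        ∑ i, w i * Lval R RT y i ≤ ∑ i, w i * Lval R RT x0 i} :=
      convex_halfSpace_le hlin _
    have hgen : (Set.range fun g : Fin (TT+1) → ∀ s, Fin (k s) =>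
        xvec M (πseq π (TT+1) g)) ⊆ {y : FreqSpace N k TT |
          ∑ i, w i * Lval R RT y i ≤ ∑ i, w i * Lval R RT x0 i} := by
      rintro _ ⟨g, rfl⟩
      show ∑ i, w i * Lval R RT (xd g) i ≤ ∑ i, w i * Lval R RT x0 i
      have hineq := hwineq g
      have hexp : ∑ j, (gv g) j * w j
          = ∑ j, w j * Lval R RT (xd g) j - ∑ j, w j * Lval R RT x0 j := by
        rw [← Finset.sum_sub_distrib]
        refine Finset.sum_congr rfl fun j _ => ?_
        show (Lval R RT (xd g) j - Lval R RT x0 j) * w j = _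
        ring
      rw [hexp] at hineq
      linarith
    exact convexHull_min hgen hhalf hxhull
  · -- positive scalarization implies efficiency
    rintro ⟨w, hwpos, hmax⟩ ⟨π', hle, hne⟩
    have h1 := hmax (xvec M π') (inP_xvec M π')
    obtain ⟨i₀, hi₀⟩ := Function.ne_iff.mp hne
    have hlt : Lval R RT (xvec M π) i₀ < Lval R RT (xvec M π') i₀ :=
      (hle i₀).lt_of_ne (fun h => hi₀ h.symm)
    have h2 : ∑ i, w i * Lval R RT (xvec M π) i < ∑ i, w i * Lval R RT (xvec M π') i := by
      apply Finset.sum_lt_sum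
      · intro i _
        exact mul_le_mul_of_nonneg_left (hle i) (hwpos i).le
      · exact ⟨i₀, Finset.mem_univ _, mul_lt_mul_of_pos_left hlt (hwpos i₀)⟩
    linarith
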